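/- arXiv:1211.0586 — 3 statements merged into one kernel-verified Lean document; each statement's English description precedes it below -/
import Mathlib

section
/- Let T be a locally finite simplicial complex of dimension n with vertex set V, and let f be a simplicial map from |T| to Euclidean space E^N that is affine on each simplex. If the images f(V) of the vertices are in (2n+1)-general position (i.e., no l+1 of the image points lie on an (l-1)-dimensional affine subspace for any 1 ≤ l ≤ 2n+1), then f is injective. -/
open Geometry Set

/-- Lemma 2.2: a simplicial (affine on each simplex) map on a locally finite simplicial
complex of dimension `n` whose vertex images are in `(2n+1)`-general position (every
subfamily of at most `2n+2` vertex images is affinely independent, i.e. no `l+1` of them lie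
on an `(l-1)`-dimensional affine subspace for `1 ≤ l ≤ 2n+1`) is injective. -/
theorem simplicial_map_injective_of_general_position
    {d N n : ℕ}
    (K : Geometry.SimplicialComplex ℝ (EuclideanSpace ℝ (Fin d)))
    (hdim : ∀ s ∈ K.faces, s.card ≤ n + 1)
    (hlocfin : ∀ v ∈ K.vertices, {s ∈ K.faces | v ∈ s}.Finite)
    (f : EuclideanSpace ℝ (Fin d) → EuclideanSpace ℝ (Fin N))
    (hsimp : ∀ s ∈ K.faces,
      ∃ A : EuclideanSpace ℝ (Fin d) →ᵃ[ℝ] EuclideanSpace ℝ (Fin N),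
        ∀ x ∈ convexHull ℝ (s : Set (EuclideanSpace ℝ (Fin d))), f x = A x)
    (hgp : ∀ t : Finset K.vertices, t.card ≤ 2 * n + 2 →
      AffineIndependent ℝ (fun v : t => f (v : EuclideanSpace ℝ (Fin d)))) :
    Set.InjOn f K.space := by
  classical
  intro x hx y hy hfxy
  rw [Geometry.SimplicialComplex.mem_space_iff] at hx hy
  obtain ⟨s, hs, hxs⟩ := hx
  obtain ⟨t, ht, hyt⟩ := hy
  obtain ⟨A, hA⟩ := hsimp s hs
  obtain ⟨B, hB⟩ := hsimp t ht
  set u : Finset (EuclideanSpace ℝ (Fin d)) := s ∪ t with hu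
  have hsu : s ⊆ u := Finset.subset_union_left
  have htu : t ⊆ u := Finset.subset_union_right
  have hvert : ∀ v ∈ u, v ∈ K.vertices := by
    intro v hv
    rw [Geometry.SimplicialComplex.mem_vertices]
    rcases Finset.mem_union.1 hv with h | h
    · exact K.down_closed hs (Finset.singleton_subset_iff.2 h) (by simp)
    · exact K.down_closed ht (Finset.singleton_subset_iff.2 h) (by simp)
  -- affine independence of images of vertices of `u`
  set tv : Finset K.vertices :=
    u.attach.image (fun v => (⟨v.1, hvert v.1 v.2⟩ : K.vertices)) with htv
  have hcard : tv.card ≤ 2 * n + 2 := by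
    calc tv.card ≤ u.attach.card := Finset.card_image_le
      _ = u.card := Finset.card_attach
      _ ≤ s.card + t.card := Finset.card_union_le s t
      _ ≤ (n + 1) + (n + 1) := add_le_add (hdim s hs) (hdim t ht)
      _ = 2 * n + 2 := by ring
  have hindep0 := hgp tv hcard
  have hmem : ∀ v : u, (⟨v.1, hvert v.1 v.2⟩ : K.vertices) ∈ tv := fun v =>
    Finset.mem_image.2 ⟨⟨v.1, v.2⟩, Finset.mem_attach _ _, rfl⟩
  have hindep : AffineIndependent ℝ (fun v : u => f v.1) := by
    have hinj : Function.Injective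
        (fun v : u => (⟨⟨v.1, hvert v.1 v.2⟩, hmem v⟩ : tv)) := by
      intro a b hab
      exact Subtype.ext (congrArg (fun z : tv => z.1.1) hab)
    exact hindep0.comp_embedding ⟨_, hinj⟩
  -- weights
  obtain ⟨w1, hw1, hw1s, hx1⟩ := Finset.mem_convexHull'.1 hxs
  obtain ⟨w2, hw2, hw2s, hy1⟩ := Finset.mem_convexHull'.1 hyt
  set W1 : EuclideanSpace ℝ (Fin d) → ℝ := fun v => if v ∈ s then w1 v else 0 with hW1
  set W2 : EuclideanSpace ℝ (Fin d) → ℝ := fun v => if v ∈ t then w2 v else 0 with hW2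
  have hW1sum : ∑ v ∈ u, W1 v = 1 := by
    rw [← hw1s]
    refine (Finset.sum_subset hsu ?_).symm.trans (Finset.sum_congr rfl fun v hv => ?_)
    · intro v _ hvs; simp [hW1, hvs]
    · simp [hW1, hv]
  have hW2sum : ∑ v ∈ u, W2 v = 1 := by
    rw [← hw2s]
    refine (Finset.sum_subset htu ?_).symm.trans (Finset.sum_congr rfl fun v hv => ?_)
    · intro v _ hvt; simp [hW2, hvt]
    · simp [hW2, hv]
  have hxW : ∑ v ∈ u, W1 v • v = x := by
    rw [← hx1]
    refine (Finset.sum_subset hsu ?_).symm.trans (Finset.sum_congr rfl fun v hv => ?_)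
    · intro v _ hvs; simp [hW1, hvs]
    · simp [hW1, hv]
  have hyW : ∑ v ∈ u, W2 v • v = y := by
    rw [← hy1]
    refine (Finset.sum_subset htu ?_).symm.trans (Finset.sum_congr rfl fun v hv => ?_)
    · intro v _ hvt; simp [hW2, hvt]
    · simp [hW2, hv]
  -- image of x under f as a combination of images of vertices
  have hfx : f x = ∑ v ∈ s, w1 v • f v := by
    have hxc : x = s.affineCombination ℝ id w1 := by
      rw [s.affineCombination_eq_linear_combination id w1 hw1s]
      simp [hx1]
    have := s.map_affineCombination id w1 hw1s A
    rw [hA x hxs, hxc, this,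
      s.affineCombination_eq_linear_combination (A ∘ id) w1 hw1s]
    refine Finset.sum_congr rfl fun v hv => ?_
    rw [Function.comp, id, ← hA v (subset_convexHull ℝ _ (Finset.mem_coe.2 hv))]
  have hfy : f y = ∑ v ∈ t, w2 v • f v := by
    have hyc : y = t.affineCombination ℝ id w2 := by
      rw [t.affineCombination_eq_linear_combination id w2 hw2s]
      simp [hy1]
    have := t.map_affineCombination id w2 hw2s B
    rw [hB y hyt, hyc, this,
      t.affineCombination_eq_linear_combination (B ∘ id) w2 hw2s]
    refine Finset.sum_congr rfl fun v hv => ?_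
    rw [Function.comp, id, ← hB v (subset_convexHull ℝ _ (Finset.mem_coe.2 hv))]
  have hfxW : ∑ v ∈ u, W1 v • f v = f x := by
    rw [hfx]
    refine (Finset.sum_subset hsu ?_).symm.trans (Finset.sum_congr rfl fun v hv => ?_)
    · intro v _ hvs; simp [hW1, hvs]
    · simp [hW1, hv]
  have hfyW : ∑ v ∈ u, W2 v • f v = f y := by
    rw [hfy]
    refine (Finset.sum_subset htu ?_).symm.trans (Finset.sum_congr rfl fun v hv => ?_)
    · intro v _ hvt; simp [hW2, hvt]
    · simp [hW2, hv]
  -- apply affine independence to the difference of weights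
  have key : ∀ v : u, W1 v.1 - W2 v.1 = 0 := by
    have h0 : ∑ v : u, (W1 v.1 - W2 v.1) = 0 := by
      rw [Finset.sum_sub_distrib]
      rw [Finset.sum_coe_sort u W1, Finset.sum_coe_sort u W2, hW1sum, hW2sum]
      ring
    have h1 : ∑ v : u, (W1 v.1 - W2 v.1) • f v.1 = 0 := by
      have : ∑ v : u, (W1 v.1 - W2 v.1) • f v.1
          = ∑ v ∈ u, (W1 v - W2 v) • f v :=
        Finset.sum_coe_sort u (fun v => (W1 v - W2 v) • f v)
      rw [this]
      have : ∑ v ∈ u, (W1 v - W2 v) • f v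
          = ∑ v ∈ u, W1 v • f v - ∑ v ∈ u, W2 v • f v := by
        rw [← Finset.sum_sub_distrib]
        exact Finset.sum_congr rfl fun v _ => sub_smul _ _ _
      rw [this, hfxW, hfyW, hfxy, sub_self]
    exact fun v =>
      affineIndependent_iff.1 hindep Finset.univ (fun v => W1 v.1 - W2 v.1) h0 h1 v
        (Finset.mem_univ v)
  have hW12 : ∀ v ∈ u, W1 v = W2 v := fun v hv =>
    sub_eq_zero.1 (key ⟨v, hv⟩)
  rw [← hxW, ← hyW]
  exact Finset.sum_congr rfl fun v hv => by rw [hW12 v hv]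
end

section
/- Let T be a locally finite simplicial complex of dimension n with vertex set V, and let f be a simplicial (affine on each simplex) map from |T| to E^N. If f(V) is in (2n)-general position, then for every point p of |T|, the restriction of f to the closed star St(p) of p in T is injective. -/
open Geometry Set

/-- The closed star of a point `p` in a simplicial complex: the union of all closed simplices
containing `p`. -/
def closedStar {d : ℕ} (K : Geometry.SimplicialComplex ℝ (EuclideanSpace ℝ (Fin d)))
    (p : EuclideanSpace ℝ (Fin d)) : Set (EuclideanSpace ℝ (Fin d)) :=
  ⋃ s ∈ {s | s ∈ K.faces ∧ p ∈ convexHull ℝ (s : Set (EuclideanSpace ℝ (Fin d)))},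
    convexHull ℝ (s : Set (EuclideanSpace ℝ (Fin d)))

/-- Auxiliary: a point of the convex hull of a face `s ⊆ u`, on which `f` agrees with an
affine map, can be written (together with its image) as a combination with weights indexed
by the elements of `u`. -/
private lemma exists_weights_aux {d N : ℕ}
    {f : EuclideanSpace ℝ (Fin d) → EuclideanSpace ℝ (Fin N)}
    {s u : Finset (EuclideanSpace ℝ (Fin d))} (hsu : s ⊆ u)
    {A : EuclideanSpace ℝ (Fin d) →ᵃ[ℝ] EuclideanSpace ℝ (Fin N)}
    (hA : ∀ z ∈ convexHull ℝ (s : Set (EuclideanSpace ℝ (Fin d))), f z = A z)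
    {x : EuclideanSpace ℝ (Fin d)} (hx : x ∈ convexHull ℝ (s : Set (EuclideanSpace ℝ (Fin d)))) :
    ∃ W : {v // v ∈ u} → ℝ, ∑ v, W v = 1 ∧
      ∑ v, W v • (v : EuclideanSpace ℝ (Fin d)) = x ∧
      ∑ v, W v • f (v : EuclideanSpace ℝ (Fin d)) = f x := by
  classical
  obtain ⟨w, hw0, hw1, hwx⟩ := Finset.mem_convexHull'.mp hx
  have hus : u ∩ s = s := Finset.inter_eq_right.mpr hsu
  have hxcomb : s.affineCombination ℝ id w = x := by
    rw [Finset.affineCombination_eq_linear_combination s id w hw1]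
    simpa using hwx
  have hfs : ∀ i ∈ s, f i = A i := fun i hi =>
    hA i (subset_convexHull ℝ _ (Finset.mem_coe.mpr hi))
  have hfx : f x = ∑ i ∈ s, w i • f i := by
    rw [hA x hx, ← hxcomb, Finset.map_affineCombination s id w hw1 A,
      Finset.affineCombination_eq_linear_combination _ _ _ hw1]
    exact Finset.sum_congr rfl fun i hi => by
      rw [Function.comp_apply, id_eq, ← hfs i hi]
  refine ⟨fun v => if (v : EuclideanSpace ℝ (Fin d)) ∈ s then w ↑v else 0, ?_, ?_, ?_⟩
  · rw [Finset.sum_coe_sort u (fun i => if i ∈ s then w i else 0),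
      Finset.sum_ite_mem, hus, hw1]
  · calc ∑ v : {v // v ∈ u}, (if (v : EuclideanSpace ℝ (Fin d)) ∈ s then w ↑v else 0) • ↑v
        = ∑ i ∈ u, (if i ∈ s then w i else 0) • i :=
          Finset.sum_coe_sort u (fun i => (if i ∈ s then w i else 0) • i)
      _ = ∑ i ∈ u, (if i ∈ s then w i • i else 0) := by
          refine Finset.sum_congr rfl fun i _ => ?_
          split <;> simp
      _ = ∑ i ∈ s, w i • i := by rw [Finset.sum_ite_mem, hus]
      _ = x := hwx
  · calc ∑ v : {v // v ∈ u},
          (if (v : EuclideanSpace ℝ (Fin d)) ∈ s then w ↑v else 0) • f ↑v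
        = ∑ i ∈ u, (if i ∈ s then w i else 0) • f i :=
          Finset.sum_coe_sort u (fun i => (if i ∈ s then w i else 0) • f i)
      _ = ∑ i ∈ u, (if i ∈ s then w i • f i else 0) := by
          refine Finset.sum_congr rfl fun i _ => ?_
          split <;> simp
      _ = ∑ i ∈ s, w i • f i := by rw [Finset.sum_ite_mem, hus]
      _ = f x := hfx.symm

/-- Corollary 2.3: if the vertex images of a simplicial map on an `n`-dimensional locally
finite simplicial complex are in `(2n)`-general position (every subfamily of at most `2n+1`
vertex images is affinely independent), then the map is injective on the closed star of every
point of the underlying space. -/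
theorem simplicial_map_injOn_closedStar_of_general_position
    {d N n : ℕ}
    (K : Geometry.SimplicialComplex ℝ (EuclideanSpace ℝ (Fin d)))
    (hdim : ∀ s ∈ K.faces, s.card ≤ n + 1)
    (hlocfin : ∀ v ∈ K.vertices, {s ∈ K.faces | v ∈ s}.Finite)
    (f : EuclideanSpace ℝ (Fin d) → EuclideanSpace ℝ (Fin N))
    (hsimp : ∀ s ∈ K.faces,
      ∃ A : EuclideanSpace ℝ (Fin d) →ᵃ[ℝ] EuclideanSpace ℝ (Fin N),
        ∀ x ∈ convexHull ℝ (s : Set (EuclideanSpace ℝ (Fin d))), f x = A x)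
    (hgp : ∀ t : Finset K.vertices, t.card ≤ 2 * n + 1 →
      AffineIndependent ℝ (fun v : t => f (v : EuclideanSpace ℝ (Fin d)))) :
    ∀ p ∈ K.space, Set.InjOn f (closedStar K p) := by
  classical
  intro p hp x hx y hy hxy
  simp only [closedStar, Set.mem_iUnion, Set.mem_setOf_eq, exists_prop] at hx hy
  obtain ⟨s, ⟨hs, hps⟩, hxs⟩ := hx
  obtain ⟨t, ⟨ht, hpt⟩, hyt⟩ := hy
  -- the two faces intersect, so their union has at most `2n+1` vertices
  have hpint : p ∈ convexHull ℝ (↑(s ∩ t) : Set (EuclideanSpace ℝ (Fin d))) :=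
    by rw [Finset.coe_inter]; exact K.inter_subset_convexHull hs ht ⟨hps, hpt⟩
  have hstne : (s ∩ t).Nonempty := by
    rcases (s ∩ t).eq_empty_or_nonempty with h | h
    · rw [h] at hpint; simp at hpint
    · exact h
  set u : Finset (EuclideanSpace ℝ (Fin d)) := s ∪ t with hu
  have hsu : s ⊆ u := Finset.subset_union_left
  have htu : t ⊆ u := Finset.subset_union_right
  have hucard : u.card ≤ 2 * n + 1 := by
    have h1 := Finset.card_union_add_card_inter s t
    rw [← hu] at h1
    have h2 : 1 ≤ (s ∩ t).card := Finset.card_pos.mpr hstne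
    have h3 := hdim s hs
    have h4 := hdim t ht
    omega
  -- every element of `u` is a vertex of the complex
  have hvert : ∀ v ∈ u, v ∈ K.vertices := by
    intro v hv
    rcases Finset.mem_union.mp hv with h | h
    · exact K.down_closed hs (Finset.singleton_subset_iff.mpr h) (by simp)
    · exact K.down_closed ht (Finset.singleton_subset_iff.mpr h) (by simp)
  -- affine independence of the images of the elements of `u`
  set t' : Finset K.vertices :=
    u.attach.image (fun v => (⟨v.1, hvert v.1 v.2⟩ : K.vertices)) with ht'
  have ht'card : t'.card ≤ 2 * n + 1 := by
    refine le_trans (Finset.card_image_le.trans ?_) hucard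
    rw [Finset.card_attach]
  have hAI := hgp t' ht'card
  have hAIu : AffineIndependent ℝ
      (fun v : {v // v ∈ u} => f (v : EuclideanSpace ℝ (Fin d))) := by
    have he : ∀ v : {v // v ∈ u},
        (⟨v.1, hvert v.1 v.2⟩ : K.vertices) ∈ t' := fun v =>
      Finset.mem_image.mpr ⟨v, Finset.mem_attach _ _, rfl⟩
    exact hAI.comp_embedding
      (⟨fun v => ⟨⟨v.1, hvert v.1 v.2⟩, he v⟩,
        fun a b h => Subtype.ext (congrArg (fun z => z.1.1) h)⟩ : {v // v ∈ u} ↪ t')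
  -- weights for `x` and `y`
  obtain ⟨A, hA⟩ := hsimp s hs
  obtain ⟨B, hB⟩ := hsimp t ht
  obtain ⟨W1, hW1sum, hW1x, hW1fx⟩ := exists_weights_aux hsu hA hxs
  obtain ⟨W2, hW2sum, hW2y, hW2fy⟩ := exists_weights_aux htu hB hyt
  -- affine independence forces the weights to agree
  have hWeq : W1 = W2 := by
    refine (affineIndependent_iff_eq_of_fintype_affineCombination_eq ℝ
      (fun v : {v // v ∈ u} => f (v : EuclideanSpace ℝ (Fin d)))).mp hAIu W1 W2 hW1sum hW2sum ?_
    rw [Finset.univ.affineCombination_eq_linear_combination _ _ hW1sum,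
      Finset.univ.affineCombination_eq_linear_combination _ _ hW2sum,
      hW1fx, hW2fy, hxy]
  rw [← hW1x, ← hW2y, hWeq]
end

section
/- Let X be a compact metric space, Y a metric space, and (h_i) a sequence of continuous maps X → Y, each of which is an intrinsic isometry (pull_{h_i}(x,x') = d_X(x,x') for all x,x'). Suppose h_i converges uniformly to h and that for each i, with δ_i = δ(h_i, 1/i) chosen as in Petrunin's lemma, one has sup_x d_Y(h(x), h_i(x)) < δ_i. Then pull_h(x,x') ≥ d_X(x,x') - 1/i for every i, and hence pull_h(x,x') ≥ d_X(x,x') for all x, x' ∈ X. -/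
open scoped BigOperators ENNReal

/-- `pullEps f ε x x'` : the infimum over all `ε`-chains `x = p 0, p 1, ..., p n = x'`
(consecutive distances at most `ε`) of the sum of distances of consecutive images under `f`. -/
noncomputable def pullEps {X Y : Type*} [PseudoMetricSpace X] [PseudoMetricSpace Y]
    (f : X → Y) (ε : ℝ) (x x' : X) : ℝ≥0∞ :=
  ⨅ (n : ℕ) (p : Fin (n + 1) → X)
    (_ : p 0 = x ∧ p (Fin.last n) = x' ∧ ∀ i : Fin n, dist (p i.castSucc) (p i.succ) ≤ ε),
    ∑ i : Fin n, edist (f (p i.castSucc)) (f (p i.succ))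

/-- The pullback metric `pull_f(x,x') = lim_{ε → 0} pull_{f,ε}(x,x')`; since `pull_{f,ε}` is
monotone nonincreasing in `ε`, the limit is the supremum over `ε > 0`. -/
noncomputable def pullMetric {X Y : Type*} [PseudoMetricSpace X] [PseudoMetricSpace Y]
    (f : X → Y) (x x' : X) : ℝ≥0∞ :=
  ⨆ (ε : ℝ) (_ : 0 < ε), pullEps f ε x x'

lemma edist_le_pullEps {X Y : Type*} [PseudoMetricSpace X] [PseudoMetricSpace Y]
    (f : X → Y) (ε : ℝ) (x x' : X) : edist (f x) (f x') ≤ pullEps f ε x x' := by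
  refine le_iInf fun n => le_iInf fun p => le_iInf fun hp => ?_
  obtain ⟨h0, hl, _⟩ := hp
  set q : ℕ → Y := fun k => f (p ⟨min k n, by omega⟩) with hq
  have key : edist (q 0) (q n) ≤ ∑ i ∈ Finset.range n, edist (q i) (q (i + 1)) :=
    edist_le_range_sum_edist q n
  have h0' : q 0 = f x := by
    have e : (⟨min 0 n, by omega⟩ : Fin (n+1)) = 0 := by ext; simp
    simp only [hq]; rw [e, h0]
  have hl' : q n = f x' := by
    have e : (⟨min n n, by omega⟩ : Fin (n+1)) = Fin.last n := by ext; simp [Fin.last]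
    simp only [hq]; rw [e, hl]
  rw [h0', hl'] at key
  refine key.trans (le_of_eq ?_)
  rw [Finset.sum_range fun i => edist (q i) (q (i + 1))]
  refine Finset.sum_congr rfl fun i _ => ?_
  have h1 : (⟨min (i : ℕ) n, by omega⟩ : Fin (n+1)) = i.castSucc := by
    ext; simp [Nat.min_eq_left (le_of_lt i.isLt)]
  have h2 : (⟨min ((i : ℕ) + 1) n, by omega⟩ : Fin (n+1)) = i.succ := by
    ext; simp [Nat.min_eq_left (Nat.succ_le_of_lt i.isLt)]
  simp only [hq, h1, h2]

lemma edist_le_pullMetric {X Y : Type*} [PseudoMetricSpace X] [PseudoMetricSpace Y]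
    (f : X → Y) (x x' : X) : edist (f x) (f x') ≤ pullMetric f x x' :=
  (edist_le_pullEps f 1 x x').trans (le_iSup₂ (f := fun ε _ => pullEps f ε x x') 1 one_pos)

/-- If intrinsic isometries `h i` on a compact space converge uniformly to `h`, with
`d(h, h i) < δ i` where `δ i = δ(h i, 1/(i+1))` is as in Petrunin's lemma, then
`pull_h ≥ d_X - 1/(i+1)` for every `i`, and hence `pull_h ≥ d_X`. -/
theorem pullMetric_limit_ge {X Y : Type*} [MetricSpace X] [CompactSpace X] [MetricSpace Y]
    (h : ℕ → X → Y) (hcont : ∀ i, Continuous (h i))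
    (hiso : ∀ i, ∀ x x' : X, pullMetric (h i) x x' = edist x x')
    (H : X → Y) (hunif : TendstoUniformly h H Filter.atTop)
    (δ : ℕ → ℝ) (hδpos : ∀ i, 0 < δ i)
    (hPetrunin : ∀ i : ℕ, ∀ g : X → Y, LipschitzWith 1 g →
      (∀ x, dist (h i x) (g x) < δ i) →
      ∀ x x' : X, pullMetric (h i) x x' < pullMetric g x x' + ENNReal.ofReal (1 / (i + 1)))
    (hclose : ∀ i : ℕ, ∀ x : X, dist (H x) (h i x) < δ i) :
    (∀ i : ℕ, ∀ x x' : X,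
        edist x x' - ENNReal.ofReal (1 / (i + 1)) ≤ pullMetric H x x') ∧
    ∀ x x' : X, edist x x' ≤ pullMetric H x x' := by
  -- each h i is 1-Lipschitz
  have hlip : ∀ i, LipschitzWith 1 (h i) := fun i =>
    LipschitzWith.of_edist_le fun x x' => (edist_le_pullMetric (h i) x x').trans_eq (hiso i x x')
  -- H is 1-Lipschitz as the pointwise limit
  have hHlip : LipschitzWith 1 H := by
    refine LipschitzWith.of_dist_le_mul fun x x' => ?_
    have hx := hunif.tendsto_at x
    have hx' := hunif.tendsto_at x'
    have hd : Filter.Tendsto (fun i => dist (h i x) (h i x')) Filter.atTop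
        (nhds (dist (H x) (H x'))) := hx.dist hx'
    refine le_of_tendsto hd (Filter.Eventually.of_forall fun i => ?_)
    simpa using (hlip i).dist_le_mul x x'
  have main : ∀ i : ℕ, ∀ x x' : X,
      edist x x' - ENNReal.ofReal (1 / (i + 1)) ≤ pullMetric H x x' := by
    intro i x x'
    have := hPetrunin i H hHlip (fun x => by
      rw [dist_comm]; exact hclose i x) x x'
    rw [hiso i x x'] at this
    exact tsub_le_iff_right.mpr this.le
  refine ⟨main, fun x x' => ?_⟩
  refine ENNReal.le_of_forall_pos_le_add fun ε hε _ => ?_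
  obtain ⟨i, hi⟩ := exists_nat_one_div_lt (show (0:ℝ) < ε from hε)
  have h1 : edist x x' ≤ pullMetric H x x' + ENNReal.ofReal (1 / (i + 1)) :=
    tsub_le_iff_right.mp (main i x x')
  exact h1.trans (add_le_add_right
    ((ENNReal.ofReal_le_ofReal hi.le).trans_eq ENNReal.ofReal_coe_nnreal) _)
end
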